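/- arXiv:2501.16575 — 2 statements merged into one kernel-verified Lean document; each statement's English description precedes it below -/
import Mathlib

section
/- Define β̃_e = β/(1 + κ·(β/β_b - 1)). In the deterministic steady state, the Lagrange multiplier on the collateral constraint satisfies λ^e = (U^e_C/R^L)·(1 - β_e/β̃_e), where R^L = (1 - (1-κ)·(1 - β_b/β))/β_b. Hence λ^e > 0 if and only if β_e < β̃_e. -/
/-- Steady-state multiplier on the collateral constraint:
`λᵉ = (Uᵉ_C / Rᴸ)(1 - β_e/β̃_e)`, positive iff `β_e < β̃_e`. -/
theorem steady_state_collateral_multiplier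
    (β βb βe κ UbC UeC lamb lame RL : ℝ)
    (hβ0 : 0 < β) (hβ1 : β < 1) (hβb0 : 0 < βb) (hβbβ : βb ≤ β)
    (hβe0 : 0 < βe) (hβe1 : βe < 1) (hκ0 : 0 ≤ κ) (hκ1 : κ < 1)
    (hUbC : 0 < UbC) (hUeC : 0 < UeC)
    (hlamb : lamb = UbC * (1 - βb / β))
    (hRLeuler : UbC = βb * RL * UbC + lamb * (1 - κ))
    (hRL : RL = (1 - (1 - κ) * (1 - βb / β)) / βb)
    (hlame : UeC = βe * UeC * RL + lame * RL) :
    lame = (UeC / RL) * (1 - βe / (β / (1 + κ * (β / βb - 1)))) ∧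
      (0 < lame ↔ βe < β / (1 + κ * (β / βb - 1))) := by
  have hdiv : (1:ℝ) ≤ β / βb := (one_le_div hβb0).mpr hβbβ
  have hD : 0 < 1 + κ * (β / βb - 1) := by nlinarith
  have hRL' : RL = (1 + κ * (β / βb - 1)) / β := by
    rw [hRL]; field_simp; ring
  have hRL0 : 0 < RL := by rw [hRL']; exact div_pos hD hβ0
  have hβD : 0 < β / (1 + κ * (β / βb - 1)) := div_pos hβ0 hD
  have hinv : β / (1 + κ * (β / βb - 1)) = 1 / RL := by
    rw [hRL']; field_simp
  have hlame' : lame = (UeC / RL) * (1 - βe * RL) := by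
    field_simp
    linarith [hlame]
  have heq : lame = (UeC / RL) * (1 - βe / (β / (1 + κ * (β / βb - 1)))) := by
    rw [hinv, hlame']
    field_simp
  refine ⟨heq, ?_⟩
  rw [heq]
  have hU : 0 < UeC / RL := div_pos hUeC hRL0
  constructor
  · intro h
    by_contra hc
    push_neg at hc
    have : βe / (β / (1 + κ * (β / βb - 1))) ≥ 1 := (one_le_div hβD).mpr hc
    nlinarith
  · intro h
    have : βe / (β / (1 + κ * (β / βb - 1))) < 1 := (div_lt_one hβD).mpr h
    nlinarith
end

section
/- With separable worker utility U^w(C,N) = u(C) - v(N), zero steady-state capital-producer profits (so C^w = W·N + (R-1)·D), and slack constraints (λ^e = λ^L = 0), the planner's steady-state FOC for worker consumption 0 = ω_w·u'(C^w) - λ^Y + λ^C·(u''(C^w)/u'(C^w))·C^w together with ω_b·U^b_C = ω_e·U^e_C = λ^Y + λ^C implies: ω_w·u'(C^w) = λ^Y + λ^C holds if and only if -C^w·u''(C^w)/u'(C^w) = 1. In particular, for u with constant relative risk aversion γ (u'(C) = C^{-γ}), full Pareto-weighted marginal-utility equalization across all three agents holds if and only if γ = 1, i.e., u is logarithmic.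 -/
/-- Approximate perfect risk sharing (Proposition 1, part 2): full
Pareto-weighted marginal-utility equalization holds iff relative risk
aversion equals one, i.e., utility is logarithmic. -/
theorem full_risk_sharing_iff_log
    (ωb ωe ωw lamY lamC Cw UbC UeC γ up upp : ℝ)
    (hωb : 0 < ωb) (hωe : 0 < ωe) (hωw : 0 < ωw)
    (hlamY : 0 < lamY) (hlamC : 0 < lamC) (hCw : 0 < Cw)
    (hup : 0 < up) (hupp : upp < 0) (hγ : 0 < γ)
    (hFOC : 0 = ωw * up - lamY + lamC * (upp / up) * Cw)
    (hb : ωb * UbC = lamY + lamC) (he : ωe * UeC = lamY + lamC)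
    (hupv : up = Cw ^ (-γ)) (huppv : upp = -γ * Cw ^ (-γ - 1)) :
    (ωw * up = lamY + lamC ↔ -Cw * upp / up = 1) ∧
      (ωw * up = lamY + lamC ↔ γ = 1) := by
  have hup0 : up ≠ 0 := ne_of_gt hup
  have hCw0 : Cw ≠ 0 := ne_of_gt hCw
  have hmul : Cw ^ (-γ - 1) * Cw = Cw ^ (-γ) := by
    rw [← Real.rpow_add_one hCw0]; ring_nf
  have hK : -Cw * upp / up = γ := by
    rw [hupv, huppv]
    field_simp
    nlinarith [hmul]
  have h2 : lamC * (upp / up) * Cw = -(lamC * γ) := by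
    rw [← hK]; ring
  have hFOC' : ωw * up = lamY + lamC * γ := by
    rw [h2] at hFOC; linarith
  have hiff : ωw * up = lamY + lamC ↔ γ = 1 := by
    constructor
    · intro h
      have : lamC * γ = lamC := by linarith
      have := mul_left_cancel₀ (ne_of_gt hlamC) (this.trans (mul_one lamC).symm)
      exact this
    · intro h; rw [hFOC', h]; ring
  refine ⟨?_, hiff⟩
  rw [hK]; exact hiff
end
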